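/- arXiv:2412.14911 — 2 statements merged into one kernel-verified Lean document; each statement's English description precedes it below -/
import Mathlib

section
/- In every K-algebra, the operation J₂ is idempotent: J₂(J₂x) = J₂x for every element x. -/
/-- The operations of a Bochvar-type algebra ⟨A, ∨, ¬, J₂, 0, 1⟩. -/
class KOps (α : Type*) where
  sup : α → α → α
  neg : α → α
  J : α → α
  zero : α
  one : α

namespace KOps

variable {α : Type*} [KOps α]

/-- The meet, defined à la De Morgan: x ∧ y := ¬(¬x ∨ ¬y). -/
def meet (x y : α) : α := neg (sup (neg x) (neg y))

end KOps

open KOps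

/-- A K-algebra: an algebra satisfying the identities K1–K12 axiomatising
the variety generated by Bochvar algebras. (K5 holds by definition of `meet`.) -/
class KAlgebra (α : Type*) [KOps α] : Prop where
  K1 : ∀ x : α, sup x x = x
  K2 : ∀ x y : α, sup x y = sup y x
  K3 : ∀ x y z : α, sup (sup x y) z = sup x (sup y z)
  K4 : ∀ x : α, neg (neg x) = x
  K5 : ∀ x y : α, meet x y = neg (sup (neg x) (neg y))
  K6 : ∀ x y : α, meet x (sup (neg x) y) = meet x y
  K7 : ∀ x : α, sup zero x = x
  K8 : (one : α) = neg zero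
  K9 : ∀ x : α, sup (J x) (neg (J x)) = one
  K10 : ∀ x y : α, sup x (J y) = sup x (J (sup x y))
  K11 : ∀ x : α, meet x (J x) = x
  K12 : ∀ x : α, J (meet x (neg x)) = zero

section Aux

variable {α : Type*} [KOps α] [KAlgebra α]

open KAlgebra

private lemma neg_meet (x y : α) : neg (meet x y) = sup (neg x) (neg y) := by
  rw [K5, K4]

private lemma meet_comm (x y : α) : meet x y = meet y x := by
  unfold meet; rw [K2]

/-- x ∨ (x ∧ ¬x) = x -/
private lemma sup_meet_neg (x : α) : sup x (meet x (neg x)) = x := by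
  have h := K6 (α := α) (neg x) (neg x)
  have h2 := congrArg neg h
  simp only [neg_meet, K4] at h2
  -- h2 : sup x (neg (sup x (neg x))) = sup x x
  have h3 : neg (sup x (neg x)) = meet (neg x) x := by
    unfold meet; rw [K4]
  rw [h3, K1] at h2
  rw [meet_comm]; exact h2

/-- x ∨ Jx = x -/
private lemma sup_J (x : α) : sup x (J x) = x := by
  have h := K10 (α := α) x (meet x (neg x))
  rw [K12, sup_meet_neg] at h
  -- h : sup x zero = sup x (J x)
  rw [K2, K7] at h
  exact h.symm

private lemma neg_one : (neg one : α) = zero := by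
  rw [K8, K4]

private lemma meet_one (x : α) : meet x (one : α) = x := by
  unfold meet
  rw [neg_one, K2, K7, K4]

private lemma J_one : (J one : α) = one := by
  have h := K11 (α := α) one
  rw [meet_comm] at h
  unfold meet at h
  rw [neg_one, K2, K7, K4] at h
  exact h

/-- ¬Jx ∨ 1 = 1 -/
private lemma neg_J_sup_one (x : α) : sup (neg (J x)) (one : α) = one := by
  conv_lhs => rw [← K9 (α := α) x]
  rw [K2 (J x) (neg (J x)), ← K3, K1, K2]
  exact K9 x

/-- ¬Jx ∨ J(Jx) = 1 -/
private lemma neg_J_sup_JJ (x : α) : sup (neg (J x)) (J (J x)) = one := by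
  have h := K10 (α := α) (neg (J x)) (J x)
  rw [K2 (neg (J x)) (J x), K9, J_one] at h
  rw [h, neg_J_sup_one]

end Aux

/-- In every K-algebra, J₂ is idempotent. -/
theorem stmt3 {α : Type*} [KOps α] [KAlgebra α] (x : α) : J (J x) = J x := by
  open KAlgebra in
  set a := J x with ha
  set b := J a with hb
  -- a ∨ b = a
  have h1 : sup a b = a := sup_J a
  -- ¬b = ¬b ∧ ¬a
  have h2 : neg b = meet (neg b) (neg a) := by
    have h := K6 (α := α) (neg b) (neg a)
    rw [K4] at h
    have hba : sup b (neg a) = one := by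
      rw [K2]; exact neg_J_sup_JJ x
    rw [hba, meet_one] at h
    exact h
  -- hence b = b ∨ a = a ∨ b = a
  have h3 : b = sup b a := by
    have := congrArg neg h2
    rw [K4, neg_meet, K4, K4] at this
    exact this
  rw [h3, K2, h1]
end

section
/- Let A be a K-algebra satisfying additionally J₂¬x = ¬J₂x for all x. Then the map φ(a) := (J₂a, a ∧ ¬a) from A to the Cartesian product O(A) × D(A) is injective, where O(A) = {x : J₂x = x} and D(A) = {x : J₂x = 0}. -/
open KOps

namespace KAux

open KAlgebra

variable {α : Type*} [KOps α] [KAlgebra α]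

lemma neg_inj {x y : α} (h : neg x = neg y) : x = y := by
  have := congrArg neg h
  rwa [K4, K4] at this

lemma neg_one : neg (one : α) = zero := by rw [K8, K4]

lemma neg_meet (x y : α) : neg (meet x y) = sup (neg x) (neg y) := by
  rw [KOps.meet, K4]

lemma neg_sup (x y : α) : neg (sup x y) = meet (neg x) (neg y) := by
  rw [KOps.meet, K4, K4]

lemma meet_comm (x y : α) : meet x y = meet y x := by
  rw [KOps.meet, KOps.meet, K2]

lemma meet_assoc (x y z : α) : meet (meet x y) z = meet x (meet y z) := by
  rw [KOps.meet, KOps.meet, KOps.meet, KOps.meet, K4, K4, K3]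

/-- Dual of K6 : x ∨ (¬x ∧ y) = x ∨ y. -/
lemma sup_meet_neg (x y : α) : sup x (meet (neg x) y) = sup x y := by
  have h := K6 (x := neg x) (y := neg y)
  have h2 := congrArg neg h
  rw [neg_meet, neg_meet, K4, K4, neg_sup, K4] at h2
  exact h2

/-- x ∨ J x = x (uses J¬ = ¬J). -/
lemma sup_J_self (hJ : ∀ x : α, J (neg x) = neg (J x)) (x : α) :
    sup x (J x) = x := by
  have h := K11 (x := neg x)
  rw [hJ] at h
  rw [KOps.meet, K4] at h
  apply neg_inj
  rw [neg_sup, KOps.meet, K4]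
  -- goal: neg (sup x (neg (neg (J x)))) = neg x, from h : neg (sup x (neg (neg (J x)))) = neg x
  exact h

lemma one_sup_J (x : α) : sup one (J x) = one := by
  calc sup (one : α) (J x) = sup (sup (J x) (neg (J x))) (J x) := by rw [K9]
    _ = sup (sup (J x) (J x)) (neg (J x)) := by rw [K3, K3, K2 (neg (J x))]
    _ = sup (J x) (neg (J x)) := by rw [K1]
    _ = one := K9 x

lemma one_sup_negJ (x : α) : sup one (neg (J x)) = one := by
  calc sup (one : α) (neg (J x)) = sup (sup (J x) (neg (J x))) (neg (J x)) := by rw [K9]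
    _ = sup (J x) (sup (neg (J x)) (neg (J x))) := by rw [K3]
    _ = sup (J x) (neg (J x)) := by rw [K1]
    _ = one := K9 x

lemma zero_meet_J (x : α) : meet zero (J x) = zero := by
  rw [KOps.meet, ← K8, one_sup_negJ, neg_one]

lemma negJ_meet_J (x : α) : meet (neg (J x)) (J x) = zero := by
  rw [KOps.meet, K4, K9, neg_one]

lemma J_idem (hJ : ∀ x : α, J (neg x) = neg (J x)) (x : α) :
    J (J x) = J x := by
  set a := J x with ha
  set b := J (J x) with hb
  have hab : sup a b = a := sup_J_self hJ a
  have hma : meet a b = a := K11 a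
  have key : sup b (meet (neg b) a) = a := by
    rw [sup_meet_neg, K2]; exact hab
  have hz : meet (neg b) a = zero := by
    calc meet (neg b) a = meet (neg b) (meet a b) := by rw [hma]
      _ = meet (neg b) (meet b a) := by rw [meet_comm a b]
      _ = meet (meet (neg b) b) a := by rw [meet_assoc]
      _ = meet zero a := by rw [hb, negJ_meet_J]
      _ = zero := by rw [ha, zero_meet_J]
  rw [hz, K2, K7] at key
  exact key

lemma meet_neg_self_eq (x : α) : meet x (neg x) = meet x (neg (J x)) := by
  have h : sup (neg x) (neg (J x)) = neg x := by
    have := congrArg neg (K11 x)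
    rwa [neg_meet] at this
  calc meet x (neg x) = meet x (sup (neg x) (neg (J x))) := by rw [h]
    _ = meet x (neg (J x)) := K6 x (neg (J x))

/-- The key decomposition: a = J a ∨ (a ∧ ¬a). -/
lemma decomp (hJ : ∀ x : α, J (neg x) = neg (J x)) (x : α) :
    sup (J x) (meet x (neg x)) = x := by
  calc sup (J x) (meet x (neg x)) = sup (J x) (meet x (neg (J x))) := by
        rw [meet_neg_self_eq]
    _ = sup (J x) (meet (neg (J x)) x) := by rw [meet_comm x (neg (J x))]
    _ = sup (J x) x := sup_meet_neg _ _
    _ = x := by rw [K2]; exact sup_J_self hJ x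

end KAux

open KAlgebra KAux in
/-- φ(a) = (J₂a, a ∧ ¬a) is a well-defined injective map into O(A) × D(A). -/
theorem stmt16 {α : Type*} [KOps α] [KAlgebra α]
    (hJ : ∀ x : α, J (neg x) = neg (J x))
    (φ : α → α × α) (hφ : ∀ a : α, φ a = (J a, meet a (neg a))) :
    (∀ a : α, (φ a).1 ∈ {x : α | J x = x} ∧ (φ a).2 ∈ {x : α | J x = zero}) ∧
    Function.Injective φ := by
  constructor
  · intro a
    rw [hφ]
    exact ⟨J_idem hJ a, K12 a⟩
  · intro a b h
    rw [hφ a, hφ b, Prod.mk.injEq] at h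
    obtain ⟨h1, h2⟩ := h
    calc a = sup (J a) (meet a (neg a)) := (decomp hJ a).symm
      _ = sup (J b) (meet b (neg b)) := by rw [h1, h2]
      _ = b := decomp hJ b
end
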